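/- For all μ₁, μ₂ > 0: the map r ↦ F(μ₁, 1 − 1/r) is strictly decreasing on (1, ∞) and tends to 1 as r → ∞; the map r ↦ F(μ₂, 1/r) is strictly increasing on (1, ∞) and tends to +∞ as r → ∞; consequently the difference r ↦ F(μ₁, 1 − 1/r) − F(μ₂, 1/r) is strictly decreasing on (1, ∞) and has at most one zero in any interval [r₀, ∞) with r₀ > 1. -/

import Mathlib

open Filter

/-- `F(μ, x) = (1 + μ/x²)/(1 + μx)`. -/
noncomputable def F (μ x : ℝ) : ℝ := (1 + μ / x ^ 2) / (1 + μ * x)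

lemma F_anti (μ : ℝ) (hμ : 0 < μ) : StrictAntiOn (F μ) (Set.Ioi 0) := by
  intro x hx y hy hxy
  simp only [Set.mem_Ioi] at hx hy
  unfold F
  have h1 : (0:ℝ) < 1 + μ * x := by positivity
  have h2 : (0:ℝ) < 1 + μ * y := by positivity
  have hnum : 1 + μ / y ^ 2 < 1 + μ / x ^ 2 := by
    have : μ / y ^ 2 < μ / x ^ 2 := by
      apply div_lt_div_of_pos_left hμ (by positivity)
      nlinarith
    linarith
  have hnum0 : (0:ℝ) < 1 + μ / y ^ 2 := by positivity
  calc (1 + μ / y ^ 2) / (1 + μ * y) < (1 + μ / x ^ 2) / (1 + μ * y) := by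
        gcongr
    _ ≤ (1 + μ / x ^ 2) / (1 + μ * x) := by
        apply div_le_div_of_nonneg_left (by positivity) h1
        nlinarith

theorem F_existence_inequality_monotone (μ₁ μ₂ : ℝ) (hμ₁ : 0 < μ₁) (hμ₂ : 0 < μ₂) :
    StrictAntiOn (fun r : ℝ => F μ₁ (1 - 1 / r)) (Set.Ioi 1) ∧
      Tendsto (fun r : ℝ => F μ₁ (1 - 1 / r)) atTop (nhds 1) ∧
      StrictMonoOn (fun r : ℝ => F μ₂ (1 / r)) (Set.Ioi 1) ∧
      Tendsto (fun r : ℝ => F μ₂ (1 / r)) atTop atTop ∧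
      StrictAntiOn (fun r : ℝ => F μ₁ (1 - 1 / r) - F μ₂ (1 / r)) (Set.Ioi 1) ∧
      ∀ r₀ : ℝ, 1 < r₀ →
        ∀ x ∈ Set.Ici r₀, ∀ y ∈ Set.Ici r₀,
          F μ₁ (1 - 1 / x) - F μ₂ (1 / x) = 0 →
          F μ₁ (1 - 1 / y) - F μ₂ (1 / y) = 0 → x = y := by
  -- membership facts
  have hmem1 : ∀ r : ℝ, 1 < r → (1 - 1 / r) ∈ Set.Ioi (0:ℝ) := by
    intro r hr
    have hr0 : 0 < r := by linarith
    have : 1 / r < 1 := by rw [div_lt_one hr0]; exact hr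
    simp only [Set.mem_Ioi]; linarith
  have hmem2 : ∀ r : ℝ, 1 < r → (1 / r) ∈ Set.Ioi (0:ℝ) := by
    intro r hr
    have hr0 : 0 < r := by linarith
    simpa using by positivity
  have hA : StrictAntiOn (fun r : ℝ => F μ₁ (1 - 1 / r)) (Set.Ioi 1) := by
    intro x hx y hy hxy
    simp only [Set.mem_Ioi] at hx hy
    apply F_anti μ₁ hμ₁ (hmem1 x hx) (hmem1 y hy)
    have : 1 / y < 1 / x := by
      apply one_div_lt_one_div_of_lt (by linarith) hxy
    linarith
  have hM : StrictMonoOn (fun r : ℝ => F μ₂ (1 / r)) (Set.Ioi 1) := by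
    intro x hx y hy hxy
    simp only [Set.mem_Ioi] at hx hy
    apply F_anti μ₂ hμ₂ (hmem2 y hy) (hmem2 x hx)
    apply one_div_lt_one_div_of_lt (by linarith) hxy
  have hT1 : Tendsto (fun r : ℝ => F μ₁ (1 - 1 / r)) atTop (nhds 1) := by
    have harg : Tendsto (fun r : ℝ => 1 - 1 / r) atTop (nhds 1) := by
      have h0 : Tendsto (fun r : ℝ => 1 / r) atTop (nhds 0) := by
        simpa [one_div] using tendsto_inv_atTop_zero (𝕜 := ℝ)
      simpa using (tendsto_const_nhds (x := (1:ℝ))).sub h0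
    have hcont : ContinuousAt (F μ₁) 1 := by
      unfold F
      apply ContinuousAt.div
      · exact (continuousAt_const).add
          ((continuousAt_const).div (by fun_prop) (by norm_num))
      · fun_prop
      · norm_num; positivity
    have := hcont.tendsto.comp harg
    have hF1 : F μ₁ 1 = 1 := by
      unfold F; norm_num
      positivity
    simpa [hF1, Function.comp_def] using this
  have hT2 : Tendsto (fun r : ℝ => F μ₂ (1 / r)) atTop atTop := by
    have hg : Tendsto (fun r : ℝ => (1 + μ₂ * r ^ 2) / (1 + μ₂)) atTop atTop := by
      apply Tendsto.atTop_div_const (by positivity)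
      apply tendsto_atTop_add_const_left
      exact (tendsto_pow_atTop (by norm_num)).const_mul_atTop hμ₂
    apply tendsto_atTop_mono' atTop ?_ hg
    filter_upwards [eventually_ge_atTop (1:ℝ)] with r hr
    have hr0 : 0 < r := by linarith
    have hFr : F μ₂ (1 / r) = (1 + μ₂ * r ^ 2) / (1 + μ₂ / r) := by
      unfold F
      rw [div_pow, one_pow, div_div_eq_mul_div, mul_div_assoc, div_one, mul_one_div]
    rw [hFr]
    apply div_le_div_of_nonneg_left (by positivity) (by positivity)
    have : μ₂ / r ≤ μ₂ := by rw [div_le_iff₀ hr0]; nlinarith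
    linarith
  have hD : StrictAntiOn (fun r : ℝ => F μ₁ (1 - 1 / r) - F μ₂ (1 / r)) (Set.Ioi 1) := by
    intro x hx y hy hxy
    have h1 := hA hx hy hxy
    have h2 := hM hx hy hxy
    simp only at h1 h2 ⊢
    linarith
  refine ⟨hA, hT1, hM, hT2, hD, ?_⟩
  intro r₀ hr₀ x hx y hy hfx hfy
  simp only [Set.mem_Ici] at hx hy
  have hx1 : x ∈ Set.Ioi (1:ℝ) := by simp; linarith
  have hy1 : y ∈ Set.Ioi (1:ℝ) := by simp; linarith
  rcases lt_trichotomy x y with h | h | h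
  · have := hD hx1 hy1 h
    simp only at this
    rw [hfx, hfy] at this; exact absurd this (lt_irrefl 0)
  · exact h
  · have := hD hy1 hx1 h
    simp only at this
    rw [hfx, hfy] at this; exact absurd this (lt_irrefl 0)
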